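/- Let p be a prime, m ≥ 1, n = p^m, and χ a Dirichlet character modulo n with conductor p^t. For any non-negative integer k, ∑_{a ∈ (Z/nZ)*} ∑_{b₁,...,b_k ∈ Z/nZ} gcd(a-1, b₁, ..., b_k, n)·χ(a) = φ(p^m)·σ_k(p^{m-t}). -/
import Mathlib



open Finset

section helpers
variable {G H : Type*}

lemma filterKerCardMul [Group G] [Group H] [Fintype G] [Fintype H] (f : G →* H)
    (hf : Function.Surjective f) [DecidablePred fun a => f a = 1] :
    (Finset.univ.filter fun a => f a = 1).card * Fintype.card H = Fintype.card G := by
  have h1 : (Finset.univ.filter fun a => f a = 1).card = Nat.card f.ker := by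
    rw [← Fintype.card_subtype, ← Nat.card_eq_fintype_card]
    exact Nat.card_congr (Equiv.subtypeEquivRight fun a => (f.mem_ker (x := a)).symm)
  have h2 : f.ker.index = Nat.card H := by
    rw [Subgroup.index_ker, MonoidHom.range_eq_top.2 hf]
    exact Nat.card_congr Subgroup.topEquiv.toEquiv
  rw [h1, ← Nat.card_eq_fintype_card (α := H), ← h2, ← Nat.card_eq_fintype_card]
  exact Subgroup.card_mul_index f.ker

lemma filterKerCardAdd [AddGroup G] [AddGroup H] [Fintype G] [Fintype H] (f : G →+ H)
    (hf : Function.Surjective f) [DecidablePred fun a => f a = 0] :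
    (Finset.univ.filter fun a => f a = 0).card * Fintype.card H = Fintype.card G := by
  have h1 : (Finset.univ.filter fun a => f a = 0).card = Nat.card f.ker := by
    rw [← Fintype.card_subtype, ← Nat.card_eq_fintype_card]
    exact Nat.card_congr (Equiv.subtypeEquivRight fun a => (f.mem_ker (x := a)).symm)
  have h2 : f.ker.index = Nat.card H := by
    rw [AddSubgroup.index_ker, AddMonoidHom.range_eq_top.2 hf]
    exact Nat.card_congr AddSubgroup.topEquiv.toEquiv
  rw [h1, ← Nat.card_eq_fintype_card (α := H), ← h2, ← Nat.card_eq_fintype_card]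
  exact AddSubgroup.card_mul_index f.ker

lemma aux_sum_zero [Group G] [Fintype G] (P : G → Prop) [DecidablePred P]
    (hP : ∀ a b, P a → P b → P (a * b)) (hPinv : ∀ a, P a → P a⁻¹)
    (φ : G → ℂ) (hφ : ∀ a b, φ (a * b) = φ a * φ b)
    (a₀ : G) (h₀ : P a₀) (hne : φ a₀ ≠ 1) :
    ∑ a ∈ Finset.univ.filter (fun a => P a), φ a = 0 := by
  set S := ∑ a ∈ Finset.univ.filter (fun a => P a), φ a with hS
  have key : φ a₀ * S = S := by
    rw [Finset.mul_sum]
    simp_rw [← hφ]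
    refine Finset.sum_bij' (fun a _ => a₀ * a) (fun a _ => a₀⁻¹ * a) ?_ ?_ ?_ ?_ ?_
    · intro a ha
      simp only [mem_filter, mem_univ, true_and] at ha ⊢
      exact hP _ _ h₀ ha
    · intro a ha
      simp only [mem_filter, mem_univ, true_and] at ha ⊢
      exact hP _ _ (hPinv _ h₀) ha
    · intro a _; group
    · intro a _; group
    · intro a _; rfl
  have h0 : (φ a₀ - 1) * S = 0 := by rw [sub_mul, key, one_mul, sub_self]
  rcases mul_eq_zero.mp h0 with h | h
  · exact absurd (sub_eq_zero.mp h) hne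
  · exact h

end helpers

open Finset

lemma gcd_expand (n x y : ℕ) (hn : n ≠ 0) :
    Nat.gcd x (Nat.gcd y n) = ∑ d ∈ n.divisors, if d ∣ x ∧ d ∣ y then d.totient else 0 := by
  have hG : Nat.gcd x (Nat.gcd y n) ≠ 0 := by
    intro h
    exact hn (Nat.eq_zero_of_gcd_eq_zero_right (Nat.eq_zero_of_gcd_eq_zero_right h))
  conv_lhs => rw [← Nat.sum_totient (Nat.gcd x (Nat.gcd y n))]
  rw [← Finset.sum_filter]
  apply Finset.sum_congr _ (fun _ _ => rfl)
  ext d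
  simp only [Nat.mem_divisors, Finset.mem_filter, Nat.dvd_gcd_iff]
  constructor
  · rintro ⟨⟨hx, hy, hnn⟩, -⟩
    exact ⟨⟨hnn, hn⟩, hx, hy⟩
  · rintro ⟨⟨hnn, -⟩, hx, hy⟩
    exact ⟨⟨hx, hy, hnn⟩, hG⟩

lemma card_dvd_val (p m j : ℕ) [hp : Fact p.Prime] (hj : j ≤ m) :
    (Finset.univ.filter fun v : ZMod (p ^ m) => p ^ j ∣ v.val).card = p ^ (m - j) := by
  haveI : NeZero (p ^ m) := ⟨pow_ne_zero _ hp.out.ne_zero⟩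
  haveI : NeZero (p ^ j) := ⟨pow_ne_zero _ hp.out.ne_zero⟩
  have hd : p ^ j ∣ p ^ m := pow_dvd_pow p hj
  set f := (ZMod.castHom hd (ZMod (p ^ j))).toAddMonoidHom with hf
  have hsurj : Function.Surjective f := ZMod.ringHom_surjective (ZMod.castHom hd (ZMod (p ^ j)))
  have hpred : ∀ v : ZMod (p ^ m), (p ^ j ∣ v.val) ↔ f v = 0 := by
    intro v
    rw [hf, RingHom.toAddMonoidHom_eq_coe, AddMonoidHom.coe_coe, ZMod.castHom_apply,
      ← ZMod.natCast_val, ZMod.natCast_eq_zero_iff]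
  have := filterKerCardAdd f hsurj
  rw [ZMod.card, ZMod.card] at this
  have heq : (Finset.univ.filter fun v : ZMod (p ^ m) => p ^ j ∣ v.val)
      = (Finset.univ.filter fun v => f v = 0) := by
    apply Finset.filter_congr
    intro v _
    simp [hpred v]
  rw [heq]
  have hpow : p ^ (m - j) * p ^ j = p ^ m := by rw [← pow_add, Nat.sub_add_cancel hj]
  apply Nat.eq_of_mul_eq_mul_right (Nat.pos_of_ne_zero (NeZero.ne (p ^ j)))
  rw [this, hpow]

lemma unit_cond (p m j : ℕ) [hp : Fact p.Prime] (hj : j ≤ m) (a : (ZMod (p ^ m))ˣ) :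
    p ^ j ∣ ((a : ZMod (p ^ m)) - 1).val ↔ ZMod.unitsMap (pow_dvd_pow p hj) a = 1 := by
  haveI : NeZero (p ^ m) := ⟨pow_ne_zero _ hp.out.ne_zero⟩
  have hd : p ^ j ∣ p ^ m := pow_dvd_pow p hj
  rw [← ZMod.natCast_eq_zero_iff, ZMod.natCast_val,
    show (ZMod.cast ((a : ZMod (p ^ m)) - 1) : ZMod (p ^ j))
      = ZMod.castHom hd (ZMod (p ^ j)) ((a : ZMod (p ^ m)) - 1) from (ZMod.castHom_apply _).symm,
    map_sub, map_one, sub_eq_zero, Units.ext_iff, ZMod.unitsMap_def, Units.coe_map,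
    Units.val_one]
  rfl

lemma unit_ker_card (p m j : ℕ) [hp : Fact p.Prime] (hj : j ≤ m) :
    (Finset.univ.filter fun a : (ZMod (p ^ m))ˣ =>
        ZMod.unitsMap (pow_dvd_pow p hj) a = 1).card * Nat.totient (p ^ j)
      = Nat.totient (p ^ m) := by
  haveI : NeZero (p ^ m) := ⟨pow_ne_zero _ hp.out.ne_zero⟩
  haveI : NeZero (p ^ j) := ⟨pow_ne_zero _ hp.out.ne_zero⟩
  have := filterKerCardMul (ZMod.unitsMap (pow_dvd_pow p hj))
    (ZMod.unitsMap_surjective (pow_dvd_pow p hj))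
  rwa [ZMod.card_units_eq_totient, ZMod.card_units_eq_totient] at this

open DirichletCharacter in
lemma char_sum (p m t j : ℕ) [hp : Fact p.Prime] (χ : DirichletCharacter ℂ (p ^ m))
    (ht : χ.conductor = p ^ t) (hj : j ≤ m) :
    ∑ a ∈ Finset.univ.filter (fun a : (ZMod (p ^ m))ˣ =>
        ZMod.unitsMap (pow_dvd_pow p hj) a = 1), χ a
      = if t ≤ j then
          (((Finset.univ.filter fun a : (ZMod (p ^ m))ˣ =>
            ZMod.unitsMap (pow_dvd_pow p hj) a = 1).card : ℕ) : ℂ) else 0 := by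
  haveI : NeZero (p ^ m) := ⟨pow_ne_zero _ hp.out.ne_zero⟩
  have hd : p ^ j ∣ p ^ m := pow_dvd_pow p hj
  by_cases htj : t ≤ j
  · rw [if_pos htj]
    have hft : FactorsThrough χ (p ^ t) := ht ▸ conductor_mem_conductorSet χ
    obtain ⟨hdvd, χ₀, hχ⟩ := hft
    have hfj : FactorsThrough χ (p ^ j) :=
      ⟨hd, changeLevel (pow_dvd_pow p htj) χ₀, by
        rw [hχ, ← changeLevel_trans]⟩
    have hker := (factorsThrough_iff_ker_unitsMap hd).mp hfj
    rw [Finset.card_eq_sum_ones, Nat.cast_sum, Nat.cast_one]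
    apply Finset.sum_congr rfl
    intro a ha
    rw [Finset.mem_filter] at ha
    have : a ∈ (ZMod.unitsMap hd).ker := MonoidHom.mem_ker.mpr ha.2
    have h1 : χ.toUnitHom a = 1 := MonoidHom.mem_ker.mp (hker this)
    calc χ ↑a = ↑(χ.toUnitHom a) := (χ.coe_toUnitHom a).symm
    _ = 1 := by rw [h1, Units.val_one]
  · rw [if_neg htj]
    push_neg at htj
    have hnf : ¬ FactorsThrough χ (p ^ j) := by
      intro h
      have : χ.conductor ≤ p ^ j := Nat.sInf_le h
      rw [ht] at this
      exact absurd this (not_le.2 (Nat.pow_lt_pow_right hp.out.one_lt htj))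
    rw [factorsThrough_iff_ker_unitsMap hd] at hnf
    obtain ⟨a₀, ha₀, ha₀'⟩ := SetLike.not_le_iff_exists.mp hnf
    have hne : χ ↑a₀ ≠ 1 := by
      intro h
      apply ha₀'
      rw [MonoidHom.mem_ker]
      apply Units.ext
      rw [χ.coe_toUnitHom a₀, h, Units.val_one]
    exact aux_sum_zero (fun a => ZMod.unitsMap hd a = 1)
      (fun a b ha hb => by show ZMod.unitsMap hd (a * b) = 1; rw [map_mul, ha, hb, mul_one])
      (fun a ha => by show ZMod.unitsMap hd a⁻¹ = 1; rw [map_inv, ha, inv_one])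
      (fun a => χ ↑a) (fun a b => by show χ ↑(a*b) = χ ↑a * χ ↑b; rw [Units.val_mul, map_mul])
      a₀ (MonoidHom.mem_ker.mp ha₀) hne

/-- Prime power case of the main theorem: for `n = p^m`, `χ` a Dirichlet character mod `n`
with conductor `p^t`, and `k ≥ 0`:
`∑_{a,b₁,…,b_k} gcd(a-1, b₁, …, b_k, n) χ(a) = φ(p^m) · σ_k(p^(m-t))`. -/
theorem menon_dirichlet_prime_power (p m t k : ℕ) [Fact p.Prime] (hm : 1 ≤ m)
    (χ : DirichletCharacter ℂ (p ^ m)) (ht : χ.conductor = p ^ t) (htm : t ≤ m) :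
    ∑ a : (ZMod (p ^ m))ˣ, ∑ b : Fin k → ZMod (p ^ m),
      (Nat.gcd ((a : ZMod (p ^ m)) - 1).val
        (Nat.gcd (Finset.univ.gcd fun i => (b i).val) (p ^ m)) : ℂ) * χ a =
      (Nat.totient (p ^ m) * ArithmeticFunction.sigma k (p ^ (m - t)) : ℕ) := by
  have hp : Fact p.Prime := inferInstance
  haveI : NeZero (p ^ m) := ⟨pow_ne_zero _ hp.out.ne_zero⟩
  have hn0 : p ^ m ≠ 0 := NeZero.ne _
  -- step 1: expand gcd as a sum over divisors
  have hcast : ∀ (x y : ℕ), ((Nat.gcd x (Nat.gcd y (p ^ m)) : ℕ) : ℂ)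
      = ∑ d ∈ (p ^ m).divisors, if d ∣ x ∧ d ∣ y then (d.totient : ℂ) else 0 := by
    intro x y
    rw [gcd_expand _ x y hn0, Nat.cast_sum]
    exact Finset.sum_congr rfl fun d _ => by split_ifs <;> simp
  simp only [hcast, Finset.sum_mul]
  -- step 2: reorder sums to bring d outside
  conv_lhs => enter [2, a]; rw [Finset.sum_comm]
  rw [Finset.sum_comm, Nat.divisors_prime_pow hp.out m, Finset.sum_map]
  simp only [Function.Embedding.coeFn_mk]
  -- step 3: evaluate each inner double sum
  have claim : ∀ j ∈ Finset.range (m + 1),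
      (∑ a : (ZMod (p ^ m))ˣ, ∑ b : Fin k → ZMod (p ^ m),
        (if p ^ j ∣ ((a : ZMod (p ^ m)) - 1).val ∧
            p ^ j ∣ Finset.univ.gcd (fun i => (b i).val) then ((p ^ j).totient : ℂ) else 0)
          * χ a)
      = if t ≤ j then ((p ^ m).totient : ℂ) * (((p ^ (m - j) : ℕ) : ℂ)) ^ k else 0 := by
    intro j hj
    rw [Finset.mem_range, Nat.lt_succ_iff] at hj
    have hsplit : ∀ (a : (ZMod (p ^ m))ˣ) (b : Fin k → ZMod (p ^ m)),
        (if p ^ j ∣ ((a : ZMod (p ^ m)) - 1).val ∧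
            p ^ j ∣ Finset.univ.gcd (fun i => (b i).val) then ((p ^ j).totient : ℂ) else 0)
          * χ a
        = ((if p ^ j ∣ ((a : ZMod (p ^ m)) - 1).val then ((p ^ j).totient : ℂ) else 0) * χ a)
          * (if p ^ j ∣ Finset.univ.gcd (fun i => (b i).val) then (1 : ℂ) else 0) := by
      intro a b
      by_cases h1 : p ^ j ∣ ((a : ZMod (p ^ m)) - 1).val <;>
        by_cases h2 : p ^ j ∣ Finset.univ.gcd (fun i => (b i).val) <;>
        simp [h1, h2]
    simp only [hsplit]
    simp_rw [← Finset.mul_sum]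
    rw [← Finset.sum_mul]
    have hC : (∑ b : Fin k → ZMod (p ^ m),
        if p ^ j ∣ Finset.univ.gcd (fun i => (b i).val) then (1 : ℂ) else 0)
        = (((p ^ (m - j) : ℕ) : ℂ)) ^ k := by
      have h1 : ∀ b : Fin k → ZMod (p ^ m),
          (p ^ j ∣ Finset.univ.gcd fun i => (b i).val) ↔ ∀ i, p ^ j ∣ (b i).val := by
        intro b
        rw [Finset.dvd_gcd_iff]
        simp
      simp only [h1]
      rw [Finset.sum_boole]
      have hcard : (Finset.univ.filter fun b : Fin k → ZMod (p ^ m) =>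
          ∀ i, p ^ j ∣ (b i).val).card = (p ^ (m - j)) ^ k := by
        rw [← Fintype.card_subtype,
          Fintype.card_congr (Equiv.subtypePiEquivPi
            (p := fun (_ : Fin k) (v : ZMod (p ^ m)) => p ^ j ∣ v.val)),
          Fintype.card_pi]
        simp only [Fintype.card_subtype, card_dvd_val p m j hj]
        rw [Finset.prod_const, Finset.card_univ, Fintype.card_fin]
      rw [hcard]
      push_cast
      ring
    have hA : (∑ a : (ZMod (p ^ m))ˣ,
        (if p ^ j ∣ ((a : ZMod (p ^ m)) - 1).val then ((p ^ j).totient : ℂ) else 0) * χ a)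
        = if t ≤ j then ((p ^ m).totient : ℂ) else 0 := by
      have h1 : ∀ a : (ZMod (p ^ m))ˣ,
          (if p ^ j ∣ ((a : ZMod (p ^ m)) - 1).val then ((p ^ j).totient : ℂ) else 0) * χ a
          = if ZMod.unitsMap (pow_dvd_pow p hj) a = 1
              then ((p ^ j).totient : ℂ) * χ a else 0 := by
        intro a
        by_cases h : ZMod.unitsMap (pow_dvd_pow p hj) a = 1
        · rw [if_pos h, if_pos ((unit_cond p m j hj a).mpr h)]
        · rw [if_neg h, if_neg (fun hc => h ((unit_cond p m j hj a).mp hc)), zero_mul]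
      simp only [h1]
      rw [← Finset.sum_filter, ← Finset.mul_sum, char_sum p m t j χ ht hj]
      by_cases htj : t ≤ j
      · rw [if_pos htj, if_pos htj, ← Nat.cast_mul, mul_comm ((p ^ j).totient), unit_ker_card p m j hj]
      · rw [if_neg htj, if_neg htj, mul_zero]
    rw [hC, hA]
    by_cases htj : t ≤ j
    · rw [if_pos htj, if_pos htj]
    · rw [if_neg htj, if_neg htj, zero_mul]
  rw [Finset.sum_congr rfl claim]
  have hR : ArithmeticFunction.sigma k (p ^ (m - t)) = ∑ i ∈ Finset.range (m - t + 1), (p ^ i) ^ k := by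
    rw [ArithmeticFunction.sigma_apply, Nat.divisors_prime_pow hp.out, Finset.sum_map]
    simp
  rw [hR, Nat.cast_mul, Nat.cast_sum, ← Finset.sum_filter, ← Finset.mul_sum]
  congr 1
  refine Finset.sum_bij' (fun j _ => m - j) (fun i _ => m - i) ?_ ?_ ?_ ?_ ?_
  · intro j hjm
    simp only [Finset.mem_filter, Finset.mem_range] at hjm ⊢
    omega
  · intro i hi
    simp only [Finset.mem_filter, Finset.mem_range] at hi ⊢
    omega
  · intro j hjm
    simp only [Finset.mem_filter, Finset.mem_range] at hjm
    show m - (m - j) = j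
    omega
  · intro i hi
    simp only [Finset.mem_range] at hi
    show m - (m - i) = i
    omega
  · intro j hjm
    show (((p ^ (m - j) : ℕ) : ℂ)) ^ k = (((p ^ (m - j)) ^ k : ℕ) : ℂ)
    push_cast
    ring
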